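/- Let U be an irreducible AUD transition matrix on an infinite rooted locally finite tree T. Then the set of complex numbers λ that are not left eigenvalues of U, i.e. {λ ∈ ℂ : there is no nonzero L : T → ℂ with ∑_{v∈T} L(v)U(v,u) = λ·L(u) for all u ∈ T}, is countable. -/

import Mathlib

open scoped BigOperators ENNReal

/-- Nodes of trees are finite words over `ℕ`; the root is the empty word. -/
abbrev Word : Type := List ℕ

/-- The parent of a node: the word with its last letter removed. -/
def par (u : Word) : Word := u.dropLast

/-- A rooted locally finite tree: a set of words containing the root, closed
under prefixes, in which every node has finitely many children. -/
def IsTree (T : Set Word) : Prop :=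
  ([] : Word) ∈ T ∧
  (∀ u ∈ T, ∀ v : Word, v <+: u → v ∈ T) ∧
  (∀ u ∈ T, {i : ℕ | u ++ [i] ∈ T}.Finite)

/-- `desc T u` is the set of descendants of `u` in `T` (the subtree `T_u`). -/
def desc (T : Set Word) (u : Word) : Set Word := {w | w ∈ T ∧ u <+: w}

/-- The children of `u` in `T`. -/
def children (T : Set Word) (u : Word) : Set Word := {v | v ∈ T ∧ ∃ i : ℕ, v = u ++ [i]}

/-- A transition matrix on `T`: nonnegative entries, rows summing to 1 over `T`. -/
def IsTransMatrix (T : Set Word) (U : Word → Word → ℝ) : Prop :=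
  (∀ u ∈ T, ∀ v ∈ T, 0 ≤ U u v) ∧ ∀ u ∈ T, HasSum (fun v : T => U u (v : Word)) 1

/-- Almost upper-directed: positive transitions go to the parent or to a descendant. -/
def IsAUD (T : Set Word) (U : Word → Word → ℝ) : Prop :=
  ∀ u ∈ T, ∀ v ∈ T, 0 < U u v → v = par u ∨ v ∈ desc T u

/-- Almost lower-directed: positive transitions go to a child or to an ancestor. -/
def IsALD (T : Set Word) (D : Word → Word → ℝ) : Prop :=
  ∀ u ∈ T, ∀ v ∈ T, 0 < D u v → v ∈ children T u ∨ v <+: u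

/-- Random-walk transition matrix: positive transitions go to `u`, its parent or a child. -/
def IsRW (T : Set Word) (M : Word → Word → ℝ) : Prop :=
  ∀ u ∈ T, ∀ v ∈ T, 0 < M u v → v = u ∨ v = par u ∨ v ∈ children T u

/-- Irreducibility: any node can be reached from any other by positive transitions. -/
def IrreducibleOn (T : Set Word) (U : Word → Word → ℝ) : Prop :=
  ∀ u ∈ T, ∀ v ∈ T, ∃ (n : ℕ) (x : ℕ → Word),
    x 0 = u ∧ x n = v ∧ (∀ k ≤ n, x k ∈ T) ∧ ∀ k < n, 0 < U (x k) (x (k + 1))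

/-- The weight of a path (a list of nodes): product of the transitions along it. -/
def wgt (U : Word → Word → ℝ) : List Word → ℝ
  | x :: y :: rest => U x y * wgt U (y :: rest)
  | _ => 1

/-- A first-return loop at the root. -/
def IsLoop (T : Set Word) (γ : List Word) : Prop :=
  2 ≤ γ.length ∧ γ.head? = some ([] : Word) ∧ γ.getLast? = some ([] : Word) ∧
  (∀ x ∈ γ, x ∈ T) ∧
  ∀ k, 0 < k → k < γ.length - 1 → γ.getD k [] ≠ ([] : Word)

/-- The total weight of first-return loops at the root. -/
noncomputable def loopSum (T : Set Word) (U : Word → Word → ℝ) : ℝ :=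
  ∑' γ : {γ : List Word // IsLoop T γ}, wgt U γ.1

/-- Recurrence: the total weight of first-return loops at the root is 1. -/
def Recurrent (T : Set Word) (U : Word → Word → ℝ) : Prop := loopSum T U = 1

/-- Expected return time to the root. -/
noncomputable def returnTime (T : Set Word) (U : Word → Word → ℝ) : ℝ≥0∞ :=
  ∑' γ : {γ : List Word // IsLoop T γ},
    ((γ.1.length - 1 : ℕ) : ℝ≥0∞) * ENNReal.ofReal (wgt U γ.1)

/-- Positive recurrence: recurrent with finite expected return time. -/
def PosRecurrent (T : Set Word) (U : Word → Word → ℝ) : Prop :=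
  Recurrent T U ∧ returnTime T U < ⊤

/-- `descWeight T U a b = U(a, T_b)`, the total weight from `a` into the subtree `T_b`. -/
noncomputable def descWeight (T : Set Word) (U : Word → Word → ℝ) (a b : Word) : ℝ :=
  ∑' w : desc T b, U a (w : Word)

/-- The matrix `(Id - ᵘU)^{(u)}`: rows/columns indexed by the strict prefixes of `u`
(the prefix of length `i` corresponds to the index `i`), the column of `u` removed. -/
noncomputable def hMat (T : Set Word) (U : Word → Word → ℝ) (u : Word) :
    Matrix (Fin u.length) (Fin u.length) ℝ :=
  Matrix.of fun i j =>
    (if i = j then 1 else 0) -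
      (if (i : ℕ) ≤ (j : ℕ) + 1 then
        descWeight T U (u.take i) (u.take j) - descWeight T U (u.take i) (u.take ((j : ℕ) + 1))
       else 0)

/-- The h-invariant measure `π` of an AUD transition matrix, with `π(∅) = 1`:
`π(u) = det((Id - ᵘU)^{(u)}) / ∏_{∅ ≠ v ⪯ u} U(v, p(v))`. -/
noncomputable def hInv (T : Set Word) (U : Word → Word → ℝ) (u : Word) : ℝ :=
  (hMat T U u).det / ∏ k ∈ Finset.range u.length, U (u.take (k + 1)) (u.take k)

/-- Paths from `i` to the root whose interior stays away from the root and below height `b`. -/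
def IsEscape (T : Set Word) (i : Word) (b : ℕ) (γ : List Word) : Prop :=
  2 ≤ γ.length ∧ γ.head? = some i ∧ γ.getLast? = some ([] : Word) ∧
  (∀ x ∈ γ, x ∈ T) ∧
  ∀ k, 0 < k → k < γ.length - 1 → γ.getD k [] ≠ ([] : Word) ∧ (γ.getD k []).length < b

/-- `qval T U i b`: total weight of paths from `i` to the root staying away from the
root and below height `b` in their interior. -/
noncomputable def qval (T : Set Word) (U : Word → Word → ℝ) (i : Word) (b : ℕ) : ℝ :=
  ∑' γ : {γ : List Word // IsEscape T i b γ}, wgt U γ.1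

/-- An end of a tree: an infinite injective path starting at the root. -/
def IsEnd (T : Set Word) (p : ℕ → Word) : Prop :=
  p 0 = [] ∧ ∀ k, p (k + 1) ∈ children T (p k)

/-- `T^𝕡`: the nodes of the end `𝕡` together with the finite subtrees hanging from
its neighbors. -/
def endTree (T : Set Word) (p : ℕ → Word) : Set Word :=
  Set.range p ∪
    {v | v ∈ T ∧ ∃ w ∈ T, w <+: v ∧ w ∉ Set.range p ∧ par w ∈ Set.range p ∧ (desc T w).Finite}

/-- `projTo T p w v`: the projection `℘_𝕡` sends `w` to `v` (fixing `T^𝕡`, and sending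
any other node to its highest ancestor on `𝕡`). -/
def projTo (T : Set Word) (p : ℕ → Word) (w v : Word) : Prop :=
  (w ∈ endTree T p ∧ v = w) ∨
  (w ∉ endTree T p ∧ v ∈ Set.range p ∧ v <+: w ∧
    ∀ v' ∈ Set.range p, v' <+: w → v' <+: v)

/-- The projected transition matrix `U^𝕡` on `T^𝕡`. -/
noncomputable def projMat (T : Set Word) (p : ℕ → Word) (U : Word → Word → ℝ)
    (u v : Word) : ℝ :=
  ∑' w : {w : Word // w ∈ T ∧ projTo T p w v}, U u (w : Word)

/-- Longest common prefix of two words. -/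
def lcp : Word → Word → Word
  | a :: as, b :: bs => if a = b then a :: lcp as bs else []
  | _, _ => []

/-- Graph distance on the tree. -/
def treeDist (u v : Word) : ℕ :=
  (u.length - (lcp u v).length) + (v.length - (lcp u v).length)

/-- A first-return path from `w` to the set `B`. -/
def IsReturnPath (T : Set Word) (B : Set Word) (w : Word) (γ : List Word) : Prop :=
  2 ≤ γ.length ∧ γ.head? = some w ∧ (∀ x ∈ γ, x ∈ T) ∧
  (∀ k, 0 < k → k < γ.length - 1 → γ.getD k [] ∉ B) ∧
  ∃ z ∈ B, γ.getLast? = some z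

open Classical in
/-- `expReturn T U B w`: the expected first-return time from `w` to `B`, set to `∞`
when return to `B` is not almost sure. -/
noncomputable def expReturn (T : Set Word) (U : Word → Word → ℝ) (B : Set Word)
    (w : Word) : ℝ≥0∞ :=
  if (∑' γ : {γ : List Word // IsReturnPath T B w γ}, wgt U γ.1) = 1 then
    ∑' γ : {γ : List Word // IsReturnPath T B w γ},
      ((γ.1.length - 1 : ℕ) : ℝ≥0∞) * ENNReal.ofReal (wgt U γ.1)
  else ⊤

/-- `P(T)`: nodes with infinitely many descendants (union of the ends of `T`). -/
def Ptree (T : Set Word) : Set Word := {u | u ∈ T ∧ (desc T u).Infinite}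

/-- `Q(T) = 1 + ∑_{u ∈ P(T)} (|c_{P(T)}(u)| - 1)`, valued in `ℝ≥0∞`. -/
noncomputable def Qval (T : Set Word) : ℝ≥0∞ :=
  1 + ∑' u : Ptree T, (((children (Ptree T) (u : Word)).ncard - 1 : ℕ) : ℝ≥0∞)

/-- Complex version of `hMat`, with `λ` on the diagonal: `(λ·Id - ᵘU)^{(u)}`. -/
noncomputable def hMatC (T : Set Word) (U : Word → Word → ℝ) (lam : ℂ) (u : Word) :
    Matrix (Fin u.length) (Fin u.length) ℂ :=
  Matrix.of fun i j =>
    (if i = j then lam else 0) -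
      (if (i : ℕ) ≤ (j : ℕ) + 1 then
        ((descWeight T U (u.take i) (u.take j) : ℝ) : ℂ) -
          ((descWeight T U (u.take i) (u.take ((j : ℕ) + 1)) : ℝ) : ℂ)
       else 0)

/-- `π^{(λ)}(u) = det((λ·Id - ᵘU)^{(u)}) / ∏_{∅ ≠ v ⪯ u} U(v, p(v))`. -/
noncomputable def piLam (T : Set Word) (U : Word → Word → ℝ) (lam : ℂ) (u : Word) : ℂ :=
  (hMatC T U lam u).det /
    ∏ k ∈ Finset.range u.length, ((U (u.take (k + 1)) (u.take k) : ℝ) : ℂ)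

/-- The measure `π̄` of a random walk: `π̄(u) = ∏_j M(u[j-1],u[j]) / M(u[j],u[j-1])`. -/
noncomputable def rwInv (M : Word → Word → ℝ) (u : Word) : ℝ :=
  ∏ k ∈ Finset.range u.length, (M (u.take k) (u.take (k + 1)) / M (u.take (k + 1)) (u.take k))

namespace NEcountable

open Classical List Matrix

/- ---------- list lemmas ---------- -/
lemma prefix_dropLast {v w : Word} (h : v <+: w) (hne : v ≠ w) : v <+: w.dropLast := by
  obtain ⟨t, rfl⟩ := h
  cases t with
  | nil => simp at hne
  | cons i t' =>
    rw [List.dropLast_append_of_ne_nil (l := i :: t') (by simp)]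
    exact ⟨(i :: t').dropLast, rfl⟩

lemma exists_child_prefix {u w : Word} (h : u <+: w) (hne : u ≠ w) :
    ∃ i : ℕ, u ++ [i] <+: w := by
  obtain ⟨t, rfl⟩ := h
  cases t with
  | nil => simp at hne
  | cons i t' => exact ⟨i, ⟨t', by simp⟩⟩

/- ---------- tree lemmas ---------- -/
lemma root_mem_Ptree (T : Set Word) (hT : IsTree T) (hinf : T.Infinite) : [] ∈ Ptree T :=
  ⟨hT.1, Set.Infinite.mono (fun w hw => ⟨hw, List.nil_prefix⟩) hinf⟩

lemma Ptree_mono_prefix (T : Set Word) (hT : IsTree T) {u v : Word} (hu : u ∈ Ptree T)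
    (hv : v <+: u) : v ∈ Ptree T :=
  ⟨hT.2.1 u hu.1 v hv, Set.Infinite.mono (fun w hw => ⟨hw.1, hv.trans hw.2⟩) hu.2⟩

lemma children_finite (T : Set Word) (hT : IsTree T) {u : Word} (hu : u ∈ T) :
    (children T u).Finite := by
  apply ((hT.2.2 u hu).image (fun i => u ++ [i])).subset
  rintro c ⟨hcT, i, rfl⟩
  exact Set.mem_image_of_mem _ hcT

lemma exists_infinite_child (T : Set Word) (hT : IsTree T) {u : Word} (hu : u ∈ Ptree T) :
    ∃ c ∈ children T u, (desc T c).Infinite := by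
  by_contra hcon
  push_neg at hcon
  apply hu.2
  apply Set.Finite.subset (Set.Finite.union (Set.finite_singleton u)
    ((children_finite T hT hu.1).biUnion (fun c hc => hcon c hc)))
  intro w hw
  by_cases hwu : w = u
  · exact Or.inl (by simp [hwu])
  · obtain ⟨i, hi⟩ := exists_child_prefix hw.2 (fun h => hwu h.symm)
    have hciT : u ++ [i] ∈ T := hT.2.1 w hw.1 _ hi
    exact Or.inr (Set.mem_biUnion ⟨hciT, i, rfl⟩ ⟨hw.1, hi⟩)

lemma keyChild (T : Set Word) (U : Word → Word → ℝ) (hT : IsTree T)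
    (hA : IsAUD T U) (hI : IrreducibleOn T U) {u : Word} (hu : u ∈ Ptree T) :
    ∃ c, c ∈ Ptree T ∧ c ∈ children T u ∧ 0 < U c u := by
  obtain ⟨c, hc, hcinf⟩ := exists_infinite_child T hT hu
  obtain ⟨x, hx, hxc⟩ : ∃ x, x ∈ desc T c ∧ x ≠ c := by
    obtain ⟨x, hx⟩ := (hcinf.diff (Set.finite_singleton c)).nonempty
    exact ⟨x, hx.1, by simpa using hx.2⟩
  obtain ⟨i, hci⟩ := hc.2
  have hcnil : c ≠ [] := by simp [hci]
  obtain ⟨n, y, hy0, hyn, hyT, hypos⟩ := hI x hx.1 [] hT.1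
  have hex : ∃ k, ¬ c <+: y k := by
    refine ⟨n, ?_⟩
    rw [hyn]
    intro hp
    exact hcnil (List.prefix_nil.mp hp)
  have hj : ¬ c <+: y (Nat.find hex) := Nat.find_spec hex
  have hj0 : Nat.find hex ≠ 0 := by
    intro h
    rw [h, hy0] at hj
    exact hj hx.2
  have hjn : Nat.find hex ≤ n := Nat.find_le (by
    rw [hyn]; intro hp; exact hcnil (List.prefix_nil.mp hp))
  have hprev : c <+: y (Nat.find hex - 1) :=
    not_not.mp (Nat.find_min hex (by omega))
  have hstep : 0 < U (y (Nat.find hex - 1)) (y (Nat.find hex - 1 + 1)) :=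
    hypos _ (by omega)
  have hidx : Nat.find hex - 1 + 1 = Nat.find hex := by omega
  rw [hidx] at hstep
  have hmemprev : y (Nat.find hex - 1) ∈ T := hyT _ (by omega)
  have hmemj : y (Nat.find hex) ∈ T := hyT _ (by omega)
  rcases hA _ hmemprev _ hmemj hstep with h1 | h2
  · have heq : y (Nat.find hex - 1) = c := by
      by_contra hne
      apply hj
      have := prefix_dropLast hprev (fun h => hne h.symm)
      rwa [← par, ← h1] at this
    have hpar : y (Nat.find hex) = u := by
      rw [h1, heq, par, hci, List.dropLast_concat]
    refine ⟨c, ⟨hc.1, hcinf⟩, hc, ?_⟩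
    rw [← heq, ← hpar]
    exact hstep
  · exact absurd (hprev.trans h2.2) hj


/- ---------- definitions ---------- -/
noncomputable def childFinset (T : Set Word) (u : Word) : Finset Word :=
  if h : (children T u).Finite then h.toFinset else ∅

lemma mem_childFinset {T : Set Word} {u : Word} (h : (children T u).Finite) {c : Word} :
    c ∈ childFinset T u ↔ c ∈ children T u := by
  rw [childFinset, dif_pos h]; exact h.mem_toFinset

noncomputable def pivot (T : Set Word) (U : Word → Word → ℝ) (u : Word) : Word :=
  if h : ∃ c, c ∈ Ptree T ∧ c ∈ children T u ∧ 0 < U c u then h.choose else []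

lemma pivot_spec {T : Set Word} {U : Word → Word → ℝ} {u : Word}
    (h : ∃ c, c ∈ Ptree T ∧ c ∈ children T u ∧ 0 < U c u) :
    pivot T U u ∈ Ptree T ∧ pivot T U u ∈ children T u ∧ 0 < U (pivot T U u) u := by
  rw [pivot, dif_pos h]; exact h.choose_spec

noncomputable def bRoot (T : Set Word) (v : Word) : Word :=
  if h : ∃ k, v.take k ∉ Ptree T then v.take (Nat.find h) else []

lemma bRoot_eq (T : Set Word) {b : Word} (hbP : b ∉ Ptree T)
    (hpre : ∀ k < b.length, b.take k ∈ Ptree T) {w : Word} (hbw : b <+: w) :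
    bRoot T w = b := by
  have hwb : w.take b.length = b := (List.prefix_iff_eq_take.mp hbw).symm
  have hex : ∃ k, w.take k ∉ Ptree T := ⟨b.length, by rw [hwb]; exact hbP⟩
  rw [bRoot, dif_pos hex]
  have hfind : Nat.find hex = b.length := by
    rw [Nat.find_eq_iff]
    refine ⟨by rw [hwb]; exact hbP, fun j hj => not_not.mpr ?_⟩
    have hjj : w.take j = b.take j := by
      rw [← hwb, List.take_take, inf_of_le_left (le_of_lt hj)]
    rw [hjj]
    exact hpre j hj
  rw [hfind, hwb]

lemma bRoot_spec (T : Set Word) {v : Word} (hv : v ∉ Ptree T) :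
    bRoot T v <+: v ∧ bRoot T v ∉ Ptree T ∧
      ∀ k < (bRoot T v).length, (bRoot T v).take k ∈ Ptree T := by
  have hvv : v.take v.length = v := by simp
  have hex : ∃ k, v.take k ∉ Ptree T := ⟨v.length, by rw [hvv]; exact hv⟩
  rw [bRoot, dif_pos hex]
  refine ⟨List.take_prefix _ _, Nat.find_spec hex, ?_⟩
  intro k hk
  have hkm : k < Nat.find hex := by
    rw [List.length_take] at hk
    omega
  have : (v.take (Nat.find hex)).take k = v.take k := by
    rw [List.take_take, inf_of_le_left (le_of_lt hkm)]
  rw [this]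
  exact not_not.mp (Nat.find_min hex hkm)

noncomputable def Amat (T : Set Word) (U : Word → Word → ℝ) (lam : ℂ) (b : Word)
    (h : (desc T b).Finite) :
    Matrix {w : Word // w ∈ h.toFinset} {w : Word // w ∈ h.toFinset} ℂ :=
  lam • (1 : Matrix {w : Word // w ∈ h.toFinset} {w : Word // w ∈ h.toFinset} ℂ)
    - Matrix.of (fun (i j : {w : Word // w ∈ h.toFinset}) => ((U (j : Word) (i : Word) : ℝ) : ℂ))

noncomputable def extVec (T : Set Word) (U : Word → Word → ℝ) (f : Word → ℂ) (b : Word)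
    (h : (desc T b).Finite) : {w : Word // w ∈ h.toFinset} → ℂ :=
  fun i => ∑ k ∈ Finset.range b.length, f (b.take k) * ((U (b.take k) (i : Word) : ℝ) : ℂ)

noncomputable def bushVal (T : Set Word) (U : Word → Word → ℝ) (lam : ℂ) (f : Word → ℂ)
    (b w : Word) : ℂ :=
  if h : (desc T b).Finite then
    if hw : w ∈ h.toFinset then ((Amat T U lam b h)⁻¹ *ᵥ extVec T U f b h) ⟨w, hw⟩ else 0
  else 0

noncomputable def newval (T : Set Word) (U : Word → Word → ℝ) (lam : ℂ) (f : Word → ℂ)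
    (v : Word) : ℂ :=
  if v ∈ Ptree T then
    if v = pivot T U (par v) then
      (lam * f (par v)
        - (∑ k ∈ Finset.range ((par v).length + 1),
            f ((par v).take k) * ((U ((par v).take k) (par v) : ℝ) : ℂ))
        - ∑ c ∈ (childFinset T (par v)).erase (pivot T U (par v)),
            (if c ∈ Ptree T then 0 else bushVal T U lam f c c) * ((U c (par v) : ℝ) : ℂ))
      / ((U (pivot T U (par v)) (par v) : ℝ) : ℂ)
    else 0
  else bushVal T U lam f (bRoot T v) v

noncomputable def gseq (T : Set Word) (U : Word → Word → ℝ) (lam : ℂ) : ℕ → Word → ℂ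
  | 0 => fun v => if v = [] then 1 else 0
  | n + 1 => fun v =>
      if v.length ≤ n then gseq T U lam n v else newval T U lam (gseq T U lam n) v

noncomputable def Lfun (T : Set Word) (U : Word → Word → ℝ) (lam : ℂ) (v : Word) : ℂ :=
  gseq T U lam v.length v

lemma gseq_eq (T : Set Word) (U : Word → Word → ℝ) (lam : ℂ) :
    ∀ n (v : Word), v.length ≤ n → gseq T U lam n v = Lfun T U lam v := by
  intro n
  induction n with
  | zero =>
    intro v hv
    have : v = [] := List.length_eq_zero_iff.mp (Nat.le_zero.mp hv)
    subst this
    rfl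
  | succ n ih =>
    intro v hv
    by_cases h : v.length ≤ n
    · simp only [gseq]
      rw [if_pos h]
      exact ih v h
    · have hlen : v.length = n + 1 := by omega
      rw [Lfun, hlen]

lemma bushVal_congr (T : Set Word) (U : Word → Word → ℝ) (lam : ℂ) {f g : Word → ℂ}
    (b w : Word) (hfg : ∀ k < b.length, f (b.take k) = g (b.take k)) :
    bushVal T U lam f b w = bushVal T U lam g b w := by
  have hext : ∀ h : (desc T b).Finite, extVec T U f b h = extVec T U g b h := by
    intro h
    funext i
    exact Finset.sum_congr rfl fun k hk => by rw [hfg k (Finset.mem_range.mp hk)]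
  unfold bushVal
  split_ifs with h hw
  · rw [hext h]
  · rfl
  · rfl

/- ---------- the bad set ---------- -/
lemma eval_charpoly' {ι : Type*} [Fintype ι] [DecidableEq ι] (M : Matrix ι ι ℂ) (lam : ℂ) :
    (M.charpoly).eval lam = (lam • (1 : Matrix ι ι ℂ) - M).det := by
  rw [Matrix.charpoly, ← Polynomial.coe_evalRingHom, RingHom.map_det]
  congr 1
  ext i j
  by_cases hij : i = j <;>
    simp [Matrix.charmatrix_apply, Matrix.map_apply, hij, Matrix.one_apply,
      Matrix.diagonal_apply, Matrix.sub_apply, Matrix.smul_apply, smul_eq_mul]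

def Zset (T : Set Word) (U : Word → Word → ℝ) (b : Word) : Set ℂ :=
  {lam : ℂ | ∃ h : (desc T b).Finite, (Amat T U lam b h).det = 0}

def Sbad (T : Set Word) (U : Word → Word → ℝ) : Set ℂ := ⋃ b : Word, Zset T U b

lemma Zset_countable (T : Set Word) (U : Word → Word → ℝ) (b : Word) :
    (Zset T U b).Countable := by
  by_cases h : (desc T b).Finite
  · have hsub : Zset T U b ⊆ {lam : ℂ |
        ((Matrix.of (fun i j : {w : Word // w ∈ h.toFinset} =>
          ((U (j : Word) (i : Word) : ℝ) : ℂ))).charpoly).IsRoot lam} := by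
      intro lam hlam
      obtain ⟨h', hdet⟩ := hlam
      have hdet2 : (Amat T U lam b h).det = 0 := hdet
      show Polynomial.IsRoot _ lam
      rw [Polynomial.IsRoot, eval_charpoly']
      exact hdet2
    exact Set.Countable.mono hsub
      (Polynomial.finite_setOf_isRoot (Matrix.charpoly_monic _).ne_zero).countable
  · have : Zset T U b = ∅ := by
      ext lam
      simp only [Zset, Set.mem_setOf_eq, Set.mem_empty_iff_false, iff_false]
      rintro ⟨h', -⟩
      exact h h'
    rw [this]
    exact Set.countable_empty

lemma Sbad_countable (T : Set Word) (U : Word → Word → ℝ) : (Sbad T U).Countable :=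
  Set.countable_iUnion (fun b => Zset_countable T U b)


/- ---------- transition support ---------- -/
lemma support_lemma (T : Set Word) (U : Word → Word → ℝ) (hM : IsTransMatrix T U)
    (hA : IsAUD T U) {v u : Word} (hv : v ∈ T) (hu : u ∈ T) (h : U v u ≠ 0) :
    v <+: u ∨ v ∈ children T u := by
  have hpos : 0 < U v u := lt_of_le_of_ne (hM.1 v hv u hu) (Ne.symm h)
  rcases hA v hv u hu hpos with h1 | h2
  · by_cases hvnil : v = []
    · subst hvnil
      exact Or.inl (List.nil_prefix)
    · refine Or.inr ⟨hv, v.getLast hvnil, ?_⟩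
      rw [h1, par]
      exact (List.dropLast_append_getLast hvnil).symm
  · exact Or.inl h2.2

lemma tsum_eq_finset_sum (T : Set Word) (U : Word → Word → ℝ) (L : Word → ℂ) {u : Word}
    (s : Finset Word) (hsT : ∀ x ∈ s, x ∈ T)
    (hz : ∀ v ∈ T, v ∉ s → L v * ((U v u : ℝ) : ℂ) = 0) :
    (∑' v : T, L (v : Word) * ((U (v : Word) u : ℝ) : ℂ))
      = ∑ x ∈ s, L x * ((U x u : ℝ) : ℂ) := by
  have h1 : HasSum (fun v : T => L (v : Word) * ((U (v : Word) u : ℝ) : ℂ))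
      (∑ x ∈ s.subtype (· ∈ T), L (x : Word) * ((U (x : Word) u : ℝ) : ℂ)) := by
    apply hasSum_sum_of_ne_finset_zero
    intro b hb
    exact hz b b.2 (fun hbs => hb (Finset.mem_subtype.mpr hbs))
  have h2 := Finset.sum_subtype_eq_sum_filter (s := s)
    (f := fun y => L y * ((U y u : ℝ) : ℂ)) (p := fun x => x ∈ T)
  rw [h1.tsum_eq, h2, Finset.filter_true_of_mem hsT]

/- ---------- bush system ---------- -/
lemma bush_solve (T : Set Word) (U : Word → Word → ℝ) {lam : ℂ} (hlam : lam ∉ Sbad T U)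
    {b : Word} (hfin : (desc T b).Finite) (f : Word → ℂ) :
    (Amat T U lam b hfin) *ᵥ ((Amat T U lam b hfin)⁻¹ *ᵥ extVec T U f b hfin)
      = extVec T U f b hfin := by
  have hdet : (Amat T U lam b hfin).det ≠ 0 := by
    intro h
    exact hlam (Set.mem_iUnion.mpr ⟨b, ⟨hfin, h⟩⟩)
  rw [Matrix.mulVec_mulVec, Matrix.mul_nonsing_inv _ (isUnit_iff_ne_zero.mpr hdet),
    Matrix.one_mulVec]

lemma Amat_mulVec (T : Set Word) (U : Word → Word → ℝ) (lam : ℂ) (b : Word)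
    (h : (desc T b).Finite) (x : {w : Word // w ∈ h.toFinset} → ℂ)
    (i : {w : Word // w ∈ h.toFinset}) :
    (Amat T U lam b h *ᵥ x) i
      = lam * x i - ∑ j : {w : Word // w ∈ h.toFinset},
          ((U (j : Word) (i : Word) : ℝ) : ℂ) * x j := by
  simp only [Amat, Matrix.mulVec, dotProduct, Matrix.sub_apply, Matrix.smul_apply,
    Matrix.one_apply, Matrix.of_apply, smul_eq_mul, sub_mul, mul_ite, mul_one, mul_zero,
    Finset.sum_sub_distrib, ite_mul, zero_mul]
  congr 1
  simp [Finset.sum_ite_eq]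

/- ---------- values on bushes ---------- -/
lemma Lfun_eq_bushVal (T : Set Word) (U : Word → Word → ℝ) (hT : IsTree T)
    (hinf : T.Infinite) (lam : ℂ) {b w : Word} (hbP : b ∉ Ptree T)
    (hpre : ∀ k < b.length, b.take k ∈ Ptree T) (hw : w ∈ desc T b) :
    Lfun T U lam w = bushVal T U lam (Lfun T U lam) b w := by
  have hbw : b <+: w := hw.2
  have hbne : b ≠ [] := fun h => hbP (h ▸ root_mem_Ptree T hT hinf)
  have hwne : w ≠ [] := by
    intro h
    subst h
    exact hbne (List.prefix_nil.mp hbw)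
  have hwP : w ∉ Ptree T := by
    intro hPw
    by_cases hfin : (desc T b).Finite
    · exact hPw.2 (hfin.subset (fun z hz => ⟨hz.1, hbw.trans hz.2⟩))
    · exact hbP ⟨hT.2.1 w hw.1 b hbw, hfin⟩
  obtain ⟨m, hm⟩ : ∃ m, w.length = m + 1 := by
    refine ⟨w.length - 1, ?_⟩
    have := List.length_pos_iff.mpr hwne
    omega
  have hstep : Lfun T U lam w = newval T U lam (gseq T U lam m) w := by
    rw [Lfun, hm]
    simp only [gseq]
    rw [if_neg (by omega)]
  rw [hstep, newval, if_neg hwP, bRoot_eq T hbP hpre hbw]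
  apply bushVal_congr
  intro k hk
  apply gseq_eq
  rw [List.length_take]
  have := hbw.length_le
  omega


/- ---------- children of P-nodes ---------- -/
lemma child_facts {T : Set Word} {u c : Word} (hc : c ∈ children T u) :
    c.length = u.length + 1 ∧ par c = u := by
  obtain ⟨-, i, rfl⟩ := hc
  exact ⟨by simp, by rw [par, List.dropLast_concat]⟩

lemma child_val (T : Set Word) (U : Word → Word → ℝ) (hT : IsTree T) (lam : ℂ)
    {u c : Word} (hu : u ∈ Ptree T) (hc : c ∈ children T u) (hcq : c ≠ pivot T U u) :
    Lfun T U lam c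
      = if c ∈ Ptree T then 0 else bushVal T U lam (gseq T U lam u.length) c c := by
  obtain ⟨hclen, hcpar⟩ := child_facts hc
  have hstep : Lfun T U lam c = newval T U lam (gseq T U lam u.length) c := by
    rw [Lfun, hclen]
    simp only [gseq]
    rw [if_neg (by omega)]
  rw [hstep, newval, hcpar]
  by_cases hcP : c ∈ Ptree T
  · rw [if_pos hcP, if_neg hcq, if_pos hcP]
  · rw [if_neg hcP, if_neg hcP]
    have hroot : bRoot T c = c := by
      apply bRoot_eq T hcP ?_ (List.prefix_rfl)
      intro k hk
      have h1 : c.take k <+: c := List.take_prefix _ _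
      have h2 : c.take k ≠ c := by
        intro h
        have := congrArg List.length h
        rw [List.length_take] at this
        omega
      have h3 : c.take k <+: u := by
        have := prefix_dropLast h1 h2
        rwa [← par, hcpar] at this
      exact Ptree_mono_prefix T hT hu h3
    rw [hroot]

/- ---------- equation at P-nodes ---------- -/
lemma eq_at_Pnode (T : Set Word) (U : Word → Word → ℝ) (hT : IsTree T)
    (hM : IsTransMatrix T U) (hA : IsAUD T U) (hI : IrreducibleOn T U) (lam : ℂ)
    {u : Word} (hP : u ∈ Ptree T) :
    (∑' v : T, Lfun T U lam (v : Word) * ((U (v : Word) u : ℝ) : ℂ))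
      = lam * Lfun T U lam u := by
  have hu : u ∈ T := hP.1
  obtain ⟨hqP, hqc, hqpos⟩ := pivot_spec (keyChild T U hT hA hI hP)
  set n := u.length with hn
  set q := pivot T U u with hq
  obtain ⟨hqlen, hqpar⟩ := child_facts hqc
  have hcfin : (children T u).Finite := children_finite T hT hu
  set prefs : Finset Word := (Finset.range (n + 1)).image (fun k => u.take k) with hprefs
  have hpreflen : ∀ a ∈ prefs, a.length ≤ n := by
    intro a ha
    obtain ⟨k, hk, rfl⟩ := Finset.mem_image.mp ha
    rw [List.length_take]
    exact inf_le_right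
  have hsum := tsum_eq_finset_sum T U (Lfun T U lam) (u := u) (prefs ∪ childFinset T u)
    (by
      intro a ha
      rcases Finset.mem_union.mp ha with h | h
      · obtain ⟨k, hk, rfl⟩ := Finset.mem_image.mp h
        exact hT.2.1 u hu _ (List.take_prefix _ _)
      · exact ((mem_childFinset hcfin).mp h).1)
    (by
      intro v hv hvs
      by_cases hU : U v u = 0
      · simp [hU]
      · exfalso
        apply hvs
        rcases support_lemma T U hM hA hv hu hU with hp | hcch
        · apply Finset.mem_union_left
          apply Finset.mem_image.mpr
          exact ⟨v.length, Finset.mem_range.mpr (by have := hp.length_le; omega),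
            (List.prefix_iff_eq_take.mp hp).symm⟩
        · exact Finset.mem_union_right _ ((mem_childFinset hcfin).mpr hcch))
  rw [hsum]
  have hdisj : Disjoint prefs (childFinset T u) := by
    rw [Finset.disjoint_left]
    intro a ha hac
    have h1 := hpreflen a ha
    have h2 : a.length = n + 1 := (child_facts ((mem_childFinset hcfin).mp hac)).1
    omega
  rw [Finset.sum_union hdisj]
  have hqmem : q ∈ childFinset T u := (mem_childFinset hcfin).mpr hqc
  rw [← Finset.sum_erase_add _ _ hqmem]
  have hLq : Lfun T U lam q = newval T U lam (gseq T U lam n) q := by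
    rw [Lfun, hqlen]
    simp only [gseq]
    rw [if_neg (by omega)]
  have hUq : ((U q u : ℝ) : ℂ) ≠ 0 := by
    simpa using ne_of_gt hqpos
  have hqval : Lfun T U lam q * ((U q u : ℝ) : ℂ)
      = lam * Lfun T U lam u
        - (∑ k ∈ Finset.range (n + 1),
            Lfun T U lam (u.take k) * ((U (u.take k) u : ℝ) : ℂ))
        - ∑ c ∈ (childFinset T u).erase q,
            (if c ∈ Ptree T then 0 else bushVal T U lam (gseq T U lam n) c c)
              * ((U c u : ℝ) : ℂ) := by
    rw [hLq, newval, hqpar, if_pos hqP, ← hq, if_pos rfl, div_mul_cancel₀ _ hUq]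
    have e1 : gseq T U lam n u = Lfun T U lam u := gseq_eq T U lam n u (le_of_eq hn.symm)
    have e3 : (∑ k ∈ Finset.range (u.length + 1),
          gseq T U lam n (u.take k) * ((U (u.take k) u : ℝ) : ℂ))
        = ∑ k ∈ Finset.range (u.length + 1),
            Lfun T U lam (u.take k) * ((U (u.take k) u : ℝ) : ℂ) :=
      Finset.sum_congr rfl (fun k _ => by
        rw [gseq_eq T U lam n (u.take k) (by rw [List.length_take]; exact inf_le_right)])
    rw [e1, e3]
  have herase : ∑ c ∈ (childFinset T u).erase q, Lfun T U lam c * ((U c u : ℝ) : ℂ)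
      = ∑ c ∈ (childFinset T u).erase q,
          (if c ∈ Ptree T then 0 else bushVal T U lam (gseq T U lam n) c c)
            * ((U c u : ℝ) : ℂ) := by
    apply Finset.sum_congr rfl
    intro c hc
    have hcch := (mem_childFinset hcfin).mp (Finset.mem_of_mem_erase hc)
    rw [child_val T U hT lam hP hcch (Finset.ne_of_mem_erase hc)]
  have hpref : ∑ x ∈ prefs, Lfun T U lam x * ((U x u : ℝ) : ℂ)
      = ∑ k ∈ Finset.range (n + 1),
          Lfun T U lam (u.take k) * ((U (u.take k) u : ℝ) : ℂ) := by
    apply Finset.sum_image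
    intro a ha b hb hab
    have ha' := Finset.mem_range.mp ha
    have hb' := Finset.mem_range.mp hb
    have hlen := congrArg List.length hab
    rw [List.length_take, List.length_take, inf_of_le_left (by omega),
      inf_of_le_left (by omega)] at hlen
    exact hlen
  rw [herase, hpref, hqval]
  ring


/- ---------- equation at bush nodes ---------- -/
lemma eq_at_bush (T : Set Word) (U : Word → Word → ℝ) (hT : IsTree T) (hinf : T.Infinite)
    (hM : IsTransMatrix T U) (hA : IsAUD T U) {lam : ℂ} (hlam : lam ∉ Sbad T U)
    {u : Word} (hu : u ∈ T) (huP : u ∉ Ptree T) :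
    (∑' v : T, Lfun T U lam (v : Word) * ((U (v : Word) u : ℝ) : ℂ))
      = lam * Lfun T U lam u := by
  obtain ⟨hbu, hbP, hbpre⟩ := bRoot_spec T huP
  set b := bRoot T u with hb
  have hbT : b ∈ T := hT.2.1 u hu b hbu
  have hfin : (desc T b).Finite := by
    by_contra h
    exact hbP ⟨hbT, h⟩
  set x := (Amat T U lam b hfin)⁻¹ *ᵥ extVec T U (Lfun T U lam) b hfin with hx
  have hLb : ∀ w (hw : w ∈ hfin.toFinset), Lfun T U lam w = x ⟨w, hw⟩ := by
    intro w hw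
    have hwdesc : w ∈ desc T b := hfin.mem_toFinset.mp hw
    rw [Lfun_eq_bushVal T U hT hinf lam hbP hbpre hwdesc, bushVal, dif_pos hfin, dif_pos hw]
  have hsolve := bush_solve T U hlam hfin (Lfun T U lam)
  have hudesc : u ∈ desc T b := ⟨hu, hbu⟩
  have huB : u ∈ hfin.toFinset := hfin.mem_toFinset.mpr hudesc
  set sprefs : Finset Word := (Finset.range b.length).image (fun k => b.take k) with hsp
  have hsum := tsum_eq_finset_sum T U (Lfun T U lam) (u := u) (sprefs ∪ hfin.toFinset)
    (by
      intro a ha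
      rcases Finset.mem_union.mp ha with h | h
      · obtain ⟨k, hk, rfl⟩ := Finset.mem_image.mp h
        exact hT.2.1 b hbT _ (List.take_prefix _ _)
      · exact (hfin.mem_toFinset.mp h).1)
    (by
      intro v hv hvs
      by_cases hU : U v u = 0
      · simp [hU]
      · exfalso
        apply hvs
        rcases support_lemma T U hM hA hv hu hU with hp | hcch
        · by_cases hlen : b.length ≤ v.length
          · apply Finset.mem_union_right
            exact hfin.mem_toFinset.mpr ⟨hv, List.prefix_of_prefix_length_le hbu hp hlen⟩
          · apply Finset.mem_union_left
            apply Finset.mem_image.mpr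
            refine ⟨v.length, Finset.mem_range.mpr (by omega), ?_⟩
            exact (List.prefix_iff_eq_take.mp
              (List.prefix_of_prefix_length_le hp hbu (by omega))).symm
        · obtain ⟨i, rfl⟩ := hcch.2
          apply Finset.mem_union_right
          exact hfin.mem_toFinset.mpr ⟨hcch.1, hbu.trans ⟨[i], rfl⟩⟩)
  rw [hsum]
  have hdisj : Disjoint sprefs hfin.toFinset := by
    rw [Finset.disjoint_left]
    intro a ha hac
    obtain ⟨k, hk, rfl⟩ := Finset.mem_image.mp ha
    have hk' := Finset.mem_range.mp hk
    have h1 : (b.take k).length < b.length := by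
      rw [List.length_take]
      omega
    have h2 : b.length ≤ (b.take k).length :=
      (hfin.mem_toFinset.mp hac).2.length_le
    omega
  rw [Finset.sum_union hdisj]
  have h1 : ∑ w ∈ sprefs, Lfun T U lam w * ((U w u : ℝ) : ℂ)
      = extVec T U (Lfun T U lam) b hfin ⟨u, huB⟩ := by
    rw [hsp, Finset.sum_image (by
      intro a ha c hc hac
      have ha' := Finset.mem_range.mp ha
      have hc' := Finset.mem_range.mp hc
      have hlen := congrArg List.length hac
      rw [List.length_take, List.length_take, inf_of_le_left (by omega),
        inf_of_le_left (by omega)] at hlen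
      exact hlen)]
    rfl
  have h2 : ∑ w ∈ hfin.toFinset, Lfun T U lam w * ((U w u : ℝ) : ℂ)
      = ∑ j : {w : Word // w ∈ hfin.toFinset}, ((U (j : Word) u : ℝ) : ℂ) * x j := by
    rw [← Finset.sum_coe_sort]
    apply Finset.sum_congr rfl
    intro j _
    rw [hLb j.1 j.2, mul_comm]
  have hrow : lam * x ⟨u, huB⟩
      - ∑ j : {w : Word // w ∈ hfin.toFinset}, ((U (j : Word) u : ℝ) : ℂ) * x j
      = extVec T U (Lfun T U lam) b hfin ⟨u, huB⟩ := by
    have := congrFun hsolve ⟨u, huB⟩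
    rwa [Amat_mulVec] at this
  rw [h1, h2, hLb u huB]
  linear_combination -hrow

/- ---------- existence of eigenfunctions ---------- -/
lemma eigen_exists (T : Set Word) (U : Word → Word → ℝ) (hT : IsTree T) (hinf : T.Infinite)
    (hM : IsTransMatrix T U) (hA : IsAUD T U) (hI : IrreducibleOn T U) {lam : ℂ}
    (hlam : lam ∉ Sbad T U) :
    ∃ L : Word → ℂ, (∃ u ∈ T, L u ≠ 0) ∧
      ∀ u ∈ T, (∑' v : T, L (v : Word) * ((U (v : Word) u : ℝ) : ℂ)) = lam * L u := by
  refine ⟨Lfun T U lam, ⟨[], hT.1, ?_⟩, ?_⟩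
  · show gseq T U lam 0 [] ≠ 0
    simp [gseq]
  · intro u hu
    by_cases hP : u ∈ Ptree T
    · exact eq_at_Pnode T U hT hM hA hI lam hP
    · exact eq_at_bush T U hT hinf hM hA hlam hu hP

end NEcountable

theorem non_eigenvalues_countable (T : Set Word) (hT : IsTree T) (hinf : T.Infinite)
    (U : Word → Word → ℝ) (hM : IsTransMatrix T U) (hA : IsAUD T U)
    (hI : IrreducibleOn T U) :
    {lam : ℂ | ¬ ∃ L : Word → ℂ, (∃ u ∈ T, L u ≠ 0) ∧
      ∀ u ∈ T, (∑' v : T, L (v : Word) * (U (v : Word) u : ℂ)) = lam * L u}.Countable := by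
  refine Set.Countable.mono ?_ (NEcountable.Sbad_countable T U)
  intro lam hlam
  by_contra hmem
  exact hlam (NEcountable.eigen_exists T U hT hinf hM hA hI hmem)
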